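/- Let (X, d) be a metric space, π : ℝ≥0 × X → X a continuous semiflow, x ∈ X a point with precompact positive orbit, and τ > 0. If every ω-limit point p of x is τ-periodic (i.e., π(τ,p) = p), then d(π(t+τ,x), π(t,x)) → 0 as t → ∞. -/

import Mathlib

open Filter Topology Metric NNReal

theorem stmt1 {X : Type*} [MetricSpace X] (π : ℝ≥0 × X → X)
    (hcont : Continuous π)
    (h0 : ∀ x : X, π (0, x) = x)
    (hadd : ∀ (t s : ℝ≥0) (x : X), π (t + s, x) = π (t, π (s, x)))
    (x : X)
    (hpc : IsCompact (closure {y : X | ∃ t : ℝ≥0, π (t, x) = y}))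
    (τ : ℝ≥0) (hτ : 0 < τ)
    (hper : ∀ p : X, (∃ u : ℕ → ℝ≥0, Tendsto u atTop atTop ∧
      Tendsto (fun n => π (u n, x)) atTop (𝓝 p)) → π (τ, p) = p) :
    Tendsto (fun t : ℝ≥0 => dist (π (t + τ, x)) (π (t, x))) atTop (𝓝 0) := by
  by_contra h
  rw [Metric.tendsto_nhds] at h
  push_neg at h
  obtain ⟨ε, hε, hfreq⟩ := h
  simp only [← not_lt] at hfreq
  have hsel : ∀ n : ℕ, ∃ t : ℝ≥0, (n : ℝ≥0) ≤ t ∧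
      ε ≤ dist (π (t + τ, x)) (π (t, x)) := by
    intro n
    obtain ⟨t, ht, hd⟩ := (frequently_atTop.mp hfreq) (n : ℝ≥0)
    refine ⟨t, ht, ?_⟩
    have := not_lt.mp hd
    simpa [Real.dist_eq, abs_of_nonneg dist_nonneg] using this
  choose u hu hud using hsel
  have hu_top : Tendsto u atTop atTop :=
    tendsto_atTop_mono hu tendsto_natCast_atTop_atTop
  have hmem : ∀ n, π (u n, x) ∈ closure {y : X | ∃ t : ℝ≥0, π (t, x) = y} :=
    fun n => subset_closure ⟨u n, rfl⟩
  obtain ⟨p, _, φ, hφ, hconv⟩ := hpc.tendsto_subseq hmem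
  have huφ : Tendsto (u ∘ φ) atTop atTop := hu_top.comp hφ.tendsto_atTop
  have hpfix : π (τ, p) = p := hper p ⟨u ∘ φ, huφ, hconv⟩
  have hconv2 : Tendsto (fun n => π (u (φ n) + τ, x)) atTop (𝓝 p) := by
    have hc : Tendsto (fun n => π (τ, π (u (φ n), x))) atTop (𝓝 (π (τ, p))) :=
      ((hcont.comp (continuous_const.prodMk continuous_id)).tendsto p).comp hconv
    have heq : (fun n => π (τ, π (u (φ n), x))) = fun n => π (u (φ n) + τ, x) :=
      funext fun n => by rw [add_comm, hadd]
    rw [heq, hpfix] at hc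
    exact hc
  have hdist : Tendsto (fun n => dist (π (u (φ n) + τ, x)) (π (u (φ n), x)))
      atTop (𝓝 0) := by
    have := hconv2.dist hconv
    simpa using this
  obtain ⟨n, hn⟩ := (hdist.eventually (gt_mem_nhds hε)).exists
  exact absurd (hud (φ n)) (not_le.mpr hn)
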